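/- Define F_n(w) = √(a_n(w) c_n(w) (a_n(w) c_n(w) − b_n(w)²)) / (2 w a_n(w)²). For every fixed real w with 0 < w < 1, lim_{n→∞} F_n(w)/n = 0, and for every fixed real w > 1, lim_{n→∞} F_n(w)/n = 1/(2 (w − 1) √w). -/

import Mathlib

open Finset Filter Topology

/-- `aP k w = ∑_{j=0}^k w^j` -/
noncomputable def aP (k : ℕ) (w : ℝ) : ℝ := ∑ j ∈ range (k + 1), w ^ j

/-- `bP k w = ∑_{j=1}^k j w^j` -/
noncomputable def bP (k : ℕ) (w : ℝ) : ℝ := ∑ j ∈ range (k + 1), (j : ℝ) * w ^ j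

/-- `cP k w = ∑_{j=1}^k j² w^j` -/
noncomputable def cP (k : ℕ) (w : ℝ) : ℝ := ∑ j ∈ range (k + 1), (j : ℝ) ^ 2 * w ^ j

/-- The first-intensity integrand for the naive model with `m = n`. -/
noncomputable def F (n : ℕ) (w : ℝ) : ℝ :=
  Real.sqrt (aP n w * cP n w * (aP n w * cP n w - bP n w ^ 2)) / (2 * w * aP n w ^ 2)

lemma aP_closed (n : ℕ) (w : ℝ) : aP n w * (w - 1) = w ^ (n+1) - 1 := by
  induction n with
  | zero => simp [aP]
  | succ n ih =>
    rw [show aP (n+1) w = aP n w + w^(n+1) by simp [aP, Finset.sum_range_succ]]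
    linear_combination ih

lemma bP_closed (n : ℕ) (w : ℝ) :
    bP n w * (w - 1)^2 = (n:ℝ) * w^(n+2) - ((n:ℝ)+1) * w^(n+1) + w := by
  induction n with
  | zero => simp [bP]
  | succ n ih =>
    rw [show bP (n+1) w = bP n w + ((n:ℝ)+1) * w^(n+1) by
      simp [bP, Finset.sum_range_succ]]
    push_cast
    linear_combination ih

lemma cP_closed (n : ℕ) (w : ℝ) :
    cP n w * (w - 1)^3 =
      w^(n+1) * (((n:ℝ)+1)^2 - (2*(n:ℝ)^2 + 2*n - 1)*w + (n:ℝ)^2 * w^2) - w*(1+w) := by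
  induction n with
  | zero => simp [cP]
  | succ n ih =>
    rw [show cP (n+1) w = cP n w + ((n:ℝ)+1)^2 * w^(n+1) by
      simp [cP, Finset.sum_range_succ]]
    push_cast
    linear_combination ih

lemma key_closed (n : ℕ) (w : ℝ) :
    (aP n w * cP n w - bP n w ^ 2) * (w - 1)^4 =
      w * (w^(n+1))^2 - (((n:ℝ)+1)^2*(w-1)^2 + 2*w) * w^(n+1) + w := by
  have h1 := aP_closed n w
  have h2 := bP_closed n w
  have h3 := cP_closed n w
  calc (aP n w * cP n w - bP n w ^ 2) * (w - 1)^4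
      = (aP n w * (w-1)) * (cP n w * (w-1)^3) - (bP n w * (w-1)^2)^2 := by ring
    _ = (w^(n+1) - 1) * (w^(n+1) * (((n:ℝ)+1)^2 - (2*(n:ℝ)^2 + 2*n - 1)*w + (n:ℝ)^2 * w^2)
          - w*(1+w)) - ((n:ℝ) * w^(n+2) - ((n:ℝ)+1) * w^(n+1) + w)^2 := by rw [h1, h2, h3]
    _ = _ := by ring

lemma cs_ineq {w : ℝ} (hw : 0 ≤ w) (n : ℕ) : bP n w ^ 2 ≤ aP n w * cP n w := by
  refine Finset.sum_sq_le_sum_mul_sum_of_sq_eq_mul _ (fun i _ => by positivity)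
    (fun i _ => by positivity) (fun i _ => by ring)

lemma aP_ge_one {w : ℝ} (hw : 0 ≤ w) (n : ℕ) : 1 ≤ aP n w := by
  have : (1:ℝ) = w ^ 0 := by simp
  rw [this]
  exact Finset.single_le_sum (f := fun j => w ^ j) (fun i _ => by positivity)
    (Finset.mem_range.2 (Nat.succ_pos n))

lemma cP_nonneg {w : ℝ} (hw : 0 ≤ w) (n : ℕ) : 0 ≤ cP n w :=
  Finset.sum_nonneg fun i _ => by positivity

lemma sub1 (w : ℝ) (hw0 : 0 < w) (hw1 : w < 1) :
    Tendsto (fun n : ℕ => F n w / n) atTop (nhds 0) := by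
  have hsa : Summable (fun j : ℕ => w ^ j) := summable_geometric_of_lt_one hw0.le hw1
  have habs : ‖w‖ < 1 := by rw [Real.norm_eq_abs, abs_of_pos hw0]; exact hw1
  have hsb : Summable (fun j : ℕ => (j:ℝ) * w ^ j) := by
    simpa using summable_pow_mul_geometric_of_norm_lt_one 1 habs
  have hsc : Summable (fun j : ℕ => (j:ℝ)^2 * w ^ j) :=
    summable_pow_mul_geometric_of_norm_lt_one 2 habs
  have hta : Tendsto (fun n : ℕ => aP n w) atTop (𝓝 (∑' j : ℕ, w ^ j)) :=
    hsa.hasSum.tendsto_sum_nat.comp (tendsto_add_atTop_nat 1)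
  have htb : Tendsto (fun n : ℕ => bP n w) atTop (𝓝 (∑' j : ℕ, (j:ℝ) * w ^ j)) :=
    hsb.hasSum.tendsto_sum_nat.comp (tendsto_add_atTop_nat 1)
  have htc : Tendsto (fun n : ℕ => cP n w) atTop (𝓝 (∑' j : ℕ, (j:ℝ)^2 * w ^ j)) :=
    hsc.hasSum.tendsto_sum_nat.comp (tendsto_add_atTop_nat 1)
  set La := ∑' j : ℕ, w ^ j
  set Lb := ∑' j : ℕ, (j:ℝ) * w ^ j
  set Lc := ∑' j : ℕ, (j:ℝ)^2 * w ^ j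
  have hLa : 1 ≤ La := ge_of_tendsto' hta (fun n => aP_ge_one hw0.le n)
  have hden : (2 * w * La ^ 2 : ℝ) ≠ 0 := by positivity
  have htF : Tendsto (fun n : ℕ => F n w) atTop
      (𝓝 (Real.sqrt (La * Lc * (La * Lc - Lb ^ 2)) / (2 * w * La ^ 2))) := by
    exact (((hta.mul htc).mul ((hta.mul htc).sub (htb.pow 2))).sqrt).div
      ((tendsto_const_nhds.mul (hta.pow 2))) hden
  have := htF.mul tendsto_inv_atTop_nhds_zero_nat
  rw [mul_zero] at this
  simpa [div_eq_mul_inv] using this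

lemma sup1 (w : ℝ) (hw1 : 1 < w) :
    Tendsto (fun n : ℕ => F n w / n) atTop
      (nhds (1 / (2 * (w - 1) * Real.sqrt w))) := by
  have hw0 : 0 < w := lt_trans one_pos hw1
  have hwm : (0:ℝ) < w - 1 := by linarith
  set v : ℕ → ℝ := fun n => (w^(n+1))⁻¹ with hv_def
  set t : ℕ → ℝ := fun n => ((n:ℝ))⁻¹ with ht_def
  have hU : ∀ n : ℕ, (w:ℝ)^(n+1) ≠ 0 := fun n => by positivity
  have hUgt : ∀ n : ℕ, 1 < (w:ℝ)^(n+1) := fun n => one_lt_pow₀ hw1 (Nat.succ_ne_zero n)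
  have hv : Tendsto v atTop (𝓝 0) := by
    have h1 : Tendsto (fun n : ℕ => (w⁻¹)^n) atTop (𝓝 0) :=
      tendsto_pow_atTop_nhds_zero_of_lt_one (by positivity) (inv_lt_one_of_one_lt₀ hw1)
    have h2 := h1.comp (tendsto_add_atTop_nat 1)
    simpa [hv_def, Function.comp_def, inv_pow] using h2
  have ht : Tendsto t atTop (𝓝 0) := tendsto_inv_atTop_nhds_zero_nat
  have hq : Tendsto (fun n : ℕ => ((n:ℝ)+1)^2 * v n) atTop (𝓝 0) := by
    have habs : |w⁻¹| < 1 := by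
      rw [abs_of_pos (by positivity : (0:ℝ) < w⁻¹)]; exact inv_lt_one_of_one_lt₀ hw1
    have h1 := (tendsto_pow_const_mul_const_pow_of_abs_lt_one 2 habs).comp
      (tendsto_add_atTop_nat 1)
    simpa [hv_def, Function.comp_def, inv_pow] using h1
  have hG : Tendsto (fun n : ℕ => 1 - v n) atTop (𝓝 1) := by
    simpa using tendsto_const_nhds.sub hv
  -- A and B formula limits
  have hAf : Tendsto (fun n : ℕ =>
      (1 + t n)^2 - (2 + 2*(t n) - (t n)^2)*w + w^2 - w*(1+w)*((t n)^2*(v n)))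
      atTop (𝓝 ((w-1)^2)) := by
    have h := ((((tendsto_const_nhds (α := ℕ) (x := (1:ℝ))).add ht).pow 2 |>.sub
        ((((tendsto_const_nhds (x := (2:ℝ))).add ((tendsto_const_nhds (x := (2:ℝ))).mul
          ht)).sub (ht.pow 2)).mul (tendsto_const_nhds (x := w)))).add
        (tendsto_const_nhds (x := w^2))).sub
        ((tendsto_const_nhds (x := w*(1+w))).mul ((ht.pow 2).mul hv))
    convert h using 2 <;> ring
  have hBf : Tendsto (fun n : ℕ =>
      w - (w-1)^2 * (((n:ℝ)+1)^2 * v n) - 2*w*(v n) + w*(v n)^2)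
      atTop (𝓝 w) := by
    have h := (((tendsto_const_nhds (α := ℕ) (x := w)).sub
        ((tendsto_const_nhds (x := (w-1)^2)).mul hq)).sub
        ((tendsto_const_nhds (x := 2*w)).mul hv)).add
        ((tendsto_const_nhds (x := w)).mul (hv.pow 2))
    convert h using 2 <;> ring
  have hdenlim : (4*w^2*(w-1)^4 * (1:ℝ)^3 : ℝ) ≠ 0 := by positivity
  have hR : Tendsto (fun n : ℕ =>
      ((1 + t n)^2 - (2 + 2*(t n) - (t n)^2)*w + w^2 - w*(1+w)*((t n)^2*(v n))) *
      (w - (w-1)^2 * (((n:ℝ)+1)^2 * v n) - 2*w*(v n) + w*(v n)^2) /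
      (4*w^2*(w-1)^4 * (1 - v n)^3)) atTop (𝓝 (1/(4*w*(w-1)^2))) := by
    have h := (hAf.mul hBf).div
      ((tendsto_const_nhds (x := 4*w^2*(w-1)^4)).mul (hG.pow 3)) hdenlim
    convert h using 2
    · rfl
    field_simp
  have hsqrt : Tendsto (fun n : ℕ =>
      Real.sqrt (((1 + t n)^2 - (2 + 2*(t n) - (t n)^2)*w + w^2 - w*(1+w)*((t n)^2*(v n))) *
      (w - (w-1)^2 * (((n:ℝ)+1)^2 * v n) - 2*w*(v n) + w*(v n)^2) /
      (4*w^2*(w-1)^4 * (1 - v n)^3))) atTop (𝓝 (1 / (2 * (w - 1) * Real.sqrt w))) := by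
    have h := hR.sqrt
    have heq : Real.sqrt (1/(4*w*(w-1)^2)) = 1 / (2 * (w - 1) * Real.sqrt w) := by
      rw [show (4*w*(w-1)^2:ℝ) = (2*(w-1)*Real.sqrt w)^2 by
        rw [mul_pow, mul_pow, Real.sq_sqrt hw0.le]; ring]
      rw [one_div, one_div, Real.sqrt_inv, Real.sqrt_sq (by positivity)]
    rwa [heq] at h
  refine Tendsto.congr' ?_ hsqrt
  filter_upwards [eventually_ge_atTop 1] with n hn
  have hn0 : ((n:ℝ)) ≠ 0 := Nat.cast_ne_zero.2 (by omega)
  have haP : 0 < aP n w := lt_of_lt_of_le one_pos (aP_ge_one hw0.le n)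
  have hP : 0 ≤ aP n w * cP n w * (aP n w * cP n w - bP n w ^ 2) :=
    mul_nonneg (mul_nonneg haP.le (cP_nonneg hw0.le n))
      (sub_nonneg.2 (cs_ineq hw0.le n))
  have hFn : 0 ≤ F n w / n := by
    apply div_nonneg _ (Nat.cast_nonneg n)
    exact div_nonneg (Real.sqrt_nonneg _) (by positivity)
  rw [← Real.sqrt_sq hFn]
  congr 1
  symm
  simp only [F]
  have hU1 : (w:ℝ)^(n+1) - 1 ≠ 0 := by have := hUgt n; linarith
  have hv1 : 1 - ((w:ℝ)^(n+1))⁻¹ ≠ 0 := by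
    have h1 : ((w:ℝ)^(n+1))⁻¹ < 1 := by
      rw [inv_lt_one_iff₀]; right; exact hUgt n
    linarith
  have e1 : aP n w = (w^(n+1) - 1)/(w-1) := by
    rw [eq_div_iff hwm.ne']; exact aP_closed n w
  have e3 : cP n w = (w^(n+1) * (((n:ℝ)+1)^2 - (2*(n:ℝ)^2 + 2*n - 1)*w + (n:ℝ)^2 * w^2)
      - w*(1+w))/(w-1)^3 := by
    rw [eq_div_iff (by positivity : ((w:ℝ)-1)^3 ≠ 0)]; exact cP_closed n w
  have eD : aP n w * cP n w - bP n w ^ 2 =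
      (w * (w^(n+1))^2 - (((n:ℝ)+1)^2*(w-1)^2 + 2*w) * w^(n+1) + w)/(w-1)^4 := by
    rw [eq_div_iff (by positivity : ((w:ℝ)-1)^4 ≠ 0)]; exact key_closed n w
  rw [div_pow, div_pow, Real.sq_sqrt hP, eD, e3, e1]
  simp only [hv_def, ht_def]
  field_simp
  ring

/-- Pointwise limits of `Fₙ(w)/n`: `0` for `0 < w < 1`, and
`1/(2(w−1)√w)` for `w > 1`. -/
theorem F_pointwise_limits :
    (∀ w : ℝ, 0 < w → w < 1 →
      Tendsto (fun n : ℕ => F n w / n) atTop (nhds 0)) ∧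
    (∀ w : ℝ, 1 < w →
      Tendsto (fun n : ℕ => F n w / n)
        atTop (nhds (1 / (2 * (w - 1) * Real.sqrt w)))) := by
  exact ⟨fun w h1 h2 => sub1 w h1 h2, fun w h => sup1 w h⟩
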